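/- Let X ∈ ℝ^{d×n}, K ∈ ℝ^{n×n} a PSD matrix with smallest eigenvalue λ_min, Σ ∈ ℝ^{d'×n}, and Y ∈ ℝ^{d×n} any matrix. Then ‖Y^{⊗q}·(Σ ⊗ K)ᵀ‖_F² ≥ λ_min²·‖Σ ⊗ Y^{⊗q}‖_F², where ⊗ on matrices is the column-wise tensor product and Y^{⊗q} is the q-fold column-wise self-tensor. -/

import Mathlib

open Matrix

lemma esum_apply {n : ℕ} {ι : Type*} (s : Finset ι) (f : ι → EuclideanSpace ℝ (Fin n))
    (m : Fin n) : (∑ i ∈ s, f i) m = ∑ i ∈ s, f i m := by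
  exact map_sum (EuclideanSpace.proj (𝕜 := ℝ) m) f s

lemma key {n : ℕ} (hn : 0 < n) (K : Matrix (Fin n) (Fin n) ℝ) (hK : K.PosSemidef)
    (v : Fin n → ℝ) :
    (⨅ i, hK.1.eigenvalues i) ^ 2 * ∑ ℓ, v ℓ ^ 2 ≤ ∑ m, (K *ᵥ v) m ^ 2 := by
  classical
  haveI : Nonempty (Fin n) := ⟨⟨0, hn⟩⟩
  set b := hK.1.eigenvectorBasis with hb
  set lam := hK.1.eigenvalues with hlam
  set w : EuclideanSpace ℝ (Fin n) := WithLp.toLp 2 v with hw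
  set c : Fin n → ℝ := fun i => b.repr w i with hc
  have hsum : ∀ x : EuclideanSpace ℝ (Fin n), ∑ i, x i ^ 2 = ∑ i, b.repr x i ^ 2 := by
    intro x
    have h1 : inner ℝ x x = inner ℝ (b.repr x) (b.repr x) := (b.repr.inner_map_map x x).symm
    simp only [PiLp.inner_apply, RCLike.inner_apply, starRingEnd_apply, star_trivial] at h1
    simpa [sq] using h1
  have hvℓ : ∀ ℓ, v ℓ = ∑ i, c i * b i ℓ := by
    intro ℓ
    have h := congrArg (fun x : EuclideanSpace ℝ (Fin n) => x ℓ) (b.sum_repr w)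
    simp only [esum_apply, PiLp.smul_apply, smul_eq_mul] at h
    exact h.symm
  have hKb : ∀ i m, ∑ ℓ, K m ℓ * b i ℓ = lam i * b i m := by
    intro i m
    have h := congrFun (hK.1.mulVec_eigenvectorBasis i) m
    simpa [Matrix.mulVec, dotProduct] using h
  set u : EuclideanSpace ℝ (Fin n) := ∑ i, (lam i * c i) • b i with hu
  have huapp : ∀ m, u m = ∑ i, (lam i * c i) * b i m := by
    intro m
    have h := esum_apply Finset.univ (fun i => (lam i * c i) • (b i : EuclideanSpace ℝ (Fin n))) m
    simp only [PiLp.smul_apply, smul_eq_mul] at h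
    exact h
  have hKv : ∀ m, (K *ᵥ v) m = u m := by
    intro m
    rw [huapp]
    simp only [Matrix.mulVec, dotProduct]
    calc ∑ ℓ, K m ℓ * v ℓ = ∑ ℓ, ∑ i, c i * (K m ℓ * b i ℓ) := by
          refine Finset.sum_congr rfl fun ℓ _ => ?_
          rw [hvℓ ℓ, Finset.mul_sum]
          refine Finset.sum_congr rfl fun i _ => by ring
      _ = ∑ i, c i * ∑ ℓ, K m ℓ * b i ℓ := by
          rw [Finset.sum_comm]
          simp [Finset.mul_sum]
      _ = ∑ i, (lam i * c i) * b i m := by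
          refine Finset.sum_congr rfl fun i _ => ?_
          rw [hKb]; ring
  have hrepr : ∀ j, b.repr u j = lam j * c j := by
    intro j
    rw [hu, map_sum]
    simp only [_root_.map_smul, b.repr_self]
    rw [esum_apply]
    simp [EuclideanSpace.single_apply, PiLp.smul_apply, smul_eq_mul]
  have h0 : 0 ≤ ⨅ i, lam i := le_ciInf fun i => hK.eigenvalues_nonneg i
  calc (⨅ i, lam i) ^ 2 * ∑ ℓ, v ℓ ^ 2
      = (⨅ i, lam i) ^ 2 * ∑ j, c j ^ 2 := by exact congrArg (fun s => (⨅ i, lam i) ^ 2 * s) (hsum w)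
    _ = ∑ j, (⨅ i, lam i) ^ 2 * c j ^ 2 := Finset.mul_sum _ _ _
    _ ≤ ∑ j, lam j ^ 2 * c j ^ 2 := by
        refine Finset.sum_le_sum fun j _ => ?_
        have := pow_le_pow_left₀ h0 (ciInf_le (Set.Finite.bddBelow (Set.finite_range lam)) j) 2
        exact mul_le_mul_of_nonneg_right this (sq_nonneg _)
    _ = ∑ j, b.repr u j ^ 2 := by
        refine Finset.sum_congr rfl fun j _ => ?_
        rw [hrepr]; ring
    _ = ∑ m, u m ^ 2 := (hsum u).symm
    _ = ∑ m, (K *ᵥ v) m ^ 2 := by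
        refine Finset.sum_congr rfl fun m _ => by rw [hKv]

/-- For PSD `K` with smallest eigenvalue `λ_min`, `‖Y^{⊗q}(Σ ⊗ K)ᵀ‖_F² ≥ λ_min²·‖Σ ⊗ Y^{⊗q}‖_F²`,
where `⊗` is the column-wise tensor product and `Y^{⊗q}` the q-fold column-wise self-tensor. -/
theorem tensor_kernel_lower_bound {d d' n q : ℕ} (hn : 0 < n)
    (Y : Matrix (Fin d) (Fin n) ℝ) (Sg : Matrix (Fin d') (Fin n) ℝ)
    (K : Matrix (Fin n) (Fin n) ℝ) (hK : K.PosSemidef) :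
    (⨅ i, hK.1.eigenvalues i) ^ 2 *
        ∑ p : Fin d' × (Fin q → Fin d), ∑ ℓ : Fin n,
          (Sg p.1 ℓ * ∏ a, Y (p.2 a) ℓ) ^ 2
      ≤ ∑ j : Fin q → Fin d, ∑ p : Fin d' × Fin n,
          (∑ ℓ : Fin n, (∏ a, Y (j a) ℓ) * (Sg p.1 ℓ * K p.2 ℓ)) ^ 2 := by
  classical
  have hmain : ∀ (j : Fin q → Fin d) (i : Fin d'),
      (⨅ t, hK.1.eigenvalues t) ^ 2 * ∑ ℓ, (Sg i ℓ * ∏ a, Y (j a) ℓ) ^ 2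
        ≤ ∑ m, (∑ ℓ, (∏ a, Y (j a) ℓ) * (Sg i ℓ * K m ℓ)) ^ 2 := by
    intro j i
    have h := key hn K hK (fun ℓ => Sg i ℓ * ∏ a, Y (j a) ℓ)
    refine h.trans_eq (Finset.sum_congr rfl fun m _ => ?_)
    congr 1
    simp only [Matrix.mulVec, dotProduct]
    exact Finset.sum_congr rfl fun ℓ _ => by ring
  calc (⨅ i, hK.1.eigenvalues i) ^ 2 *
        ∑ p : Fin d' × (Fin q → Fin d), ∑ ℓ : Fin n, (Sg p.1 ℓ * ∏ a, Y (p.2 a) ℓ) ^ 2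
      = ∑ i : Fin d', ∑ j : Fin q → Fin d,
          (⨅ t, hK.1.eigenvalues t) ^ 2 * ∑ ℓ, (Sg i ℓ * ∏ a, Y (j a) ℓ) ^ 2 := by
        rw [Fintype.sum_prod_type, Finset.mul_sum]
        exact Finset.sum_congr rfl fun i _ => Finset.mul_sum _ _ _
    _ ≤ ∑ i : Fin d', ∑ j : Fin q → Fin d,
          ∑ m, (∑ ℓ, (∏ a, Y (j a) ℓ) * (Sg i ℓ * K m ℓ)) ^ 2 := by
        exact Finset.sum_le_sum fun i _ => Finset.sum_le_sum fun j _ => hmain j i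
    _ = ∑ j : Fin q → Fin d, ∑ p : Fin d' × Fin n,
          (∑ ℓ : Fin n, (∏ a, Y (j a) ℓ) * (Sg p.1 ℓ * K p.2 ℓ)) ^ 2 := by
        rw [Finset.sum_comm]
        refine Finset.sum_congr rfl fun j _ => ?_
        rw [Fintype.sum_prod_type]
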